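/- arXiv:2605.29395 — 3 statements merged into one kernel-verified Lean document; each statement's English description precedes it below -/
import Mathlib

section
/- Let r, M ≥ 1, let a_1,…,a_M ∈ ℝ^r, y_1,…,y_M ∈ ℝ, η*_1,…,η*_M ∈ ℝ, d_1,…,d_M ∈ ℝ, and θ* ∈ ℝ^r. Let σ(x) = 1/(1+e^{−x}) and let L₃ := sup_{x∈ℝ} |σ''(x)|. Define the score map S(θ) := Σ_{ℓ=1}^M a_ℓ (y_ℓ − σ(η*_ℓ + a_ℓ·(θ − θ*) + d_ℓ)), the noise vector N := Σ_ℓ a_ℓ (y_ℓ − σ(η*_ℓ)), the matrix H := Σ_ℓ σ'(η*_ℓ) a_ℓ a_ℓ^T with smallest eigenvalue λ := λ_min(H), the bias vector B := Σ_ℓ σ'(η*_ℓ) a_ℓ d_ℓ, and the moments β := sup_{‖v‖₂=1} Σ_ℓ |a_ℓ·v| d_ℓ² and γ := sup_{‖v‖₂=1} Σ_ℓ |a_ℓ·v|³. If λ > 0, γ > 0, and R := ‖N‖₂ + ‖B‖₂ + L₃β satisfies R ≤ λ²/(4 L₃ γ), then there exists θ̂ ∈ ℝ^r with S(θ̂)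 = 0 and ‖θ̂ − θ*‖₂ ≤ 2R/λ. -/
noncomputable def logistic : ℝ → ℝ := fun x => (1 + Real.exp (-x))⁻¹

noncomputable def logistic' : ℝ → ℝ := fun x => Real.exp (-x) / (1 + Real.exp (-x)) ^ 2

noncomputable def logistic'' : ℝ → ℝ :=
  fun x => Real.exp (-x) * (Real.exp (-x) - 1) / (1 + Real.exp (-x)) ^ 3

lemma one_add_exp_pos (x : ℝ) : 0 < 1 + Real.exp (-x) := by positivity

lemma one_add_exp_ne (x : ℝ) : 1 + Real.exp (-x) ≠ 0 := (one_add_exp_pos x).ne'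

lemma hasDerivAt_base (x : ℝ) :
    HasDerivAt (fun x : ℝ => 1 + Real.exp (-x)) (-Real.exp (-x)) x := by
  simpa using ((Real.hasDerivAt_exp (-x)).comp x (hasDerivAt_neg x)).const_add 1

lemma hasDerivAt_logistic (x : ℝ) : HasDerivAt logistic (logistic' x) x := by
  have h := (hasDerivAt_base x).inv (one_add_exp_ne x)
  refine h.congr_deriv ?_
  simp [logistic']

lemma deriv_logistic : deriv logistic = logistic' :=
  funext fun x => (hasDerivAt_logistic x).deriv

lemma hasDerivAt_logistic' (x : ℝ) : HasDerivAt logistic' (logistic'' x) x := by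
  have hden : HasDerivAt (fun x : ℝ => (1 + Real.exp (-x)) ^ 2)
      (2 * (1 + Real.exp (-x)) ^ 1 * -Real.exp (-x)) x := by
    simpa using (hasDerivAt_base x).fun_pow 2
  have hexp : HasDerivAt (fun x : ℝ => Real.exp (-x)) (-Real.exp (-x)) x := by
    simpa [Function.comp_def] using (Real.hasDerivAt_exp (-x)).comp x (hasDerivAt_neg x)
  have h := hexp.div hden (by positivity)
  refine h.congr_deriv ?_
  have hne := one_add_exp_ne x
  rw [logistic'']
  field_simp
  ring

lemma deriv2_logistic : deriv (deriv logistic) = logistic'' := by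
  rw [deriv_logistic]
  exact funext fun x => (hasDerivAt_logistic' x).deriv

lemma abs_logistic''_le_one (x : ℝ) : |logistic'' x| ≤ 1 := by
  have he : 0 < Real.exp (-x) := Real.exp_pos _
  set e := Real.exp (-x)
  have hd : 0 < (1 + e) ^ 3 := by positivity
  rw [logistic'', abs_div, abs_of_pos hd, div_le_one hd, abs_mul, abs_of_pos he]
  rcases abs_cases (e - 1) with ⟨h, _⟩ | ⟨h, _⟩ <;> rw [h] <;> nlinarith

lemma logistic'_nonneg (x : ℝ) : 0 ≤ logistic' x := by
  rw [logistic']; positivity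

lemma logistic''_at_log2 : logistic'' (-Real.log 2) = 2 / 27 := by
  rw [logistic'', neg_neg, Real.exp_log (by norm_num)]
  norm_num

/-- helper: if the derivative is nonpositive on the open interval, the function decreases. -/
lemma le_of_deriv_nonpos {f f' : ℝ → ℝ} (hf : ∀ t, HasDerivAt f (f' t) t)
    {p q : ℝ} (hpq : p ≤ q) (h' : ∀ t ∈ Set.Ioo p q, f' t ≤ 0) : f q ≤ f p := by
  have h := antitoneOn_of_deriv_nonpos (convex_Icc p q)
    (fun t _ => (hf t).continuousAt.continuousWithinAt)
    (fun t ht => (hf t).differentiableAt.differentiableWithinAt)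
    (fun t ht => by
      rw [(hf t).deriv]
      exact h' t (by rwa [interior_Icc] at ht))
  exact h (Set.left_mem_Icc.2 hpq) (Set.right_mem_Icc.2 hpq) hpq

/-- derivative of the auxiliary quadratic-corrected function -/
lemma hasDerivAt_aux (x c : ℝ) (t : ℝ) :
    HasDerivAt (fun t => logistic t - logistic x - logistic' x * (t - x) + c * (t - x) ^ 2)
      (logistic' t - logistic' x + c * (2 * (t - x))) t := by
  have h1 : HasDerivAt (fun t : ℝ => t - x) 1 t := (hasDerivAt_id t).sub_const x
  have h2 : HasDerivAt (fun t : ℝ => logistic' x * (t - x)) (logistic' x) t := by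
    simpa using h1.const_mul (logistic' x)
  have h3 : HasDerivAt (fun t : ℝ => (t - x) ^ 2) (2 * (t - x)) t := by
    simpa using h1.fun_pow 2
  have h4 := (((hasDerivAt_logistic t).sub_const (logistic x)).fun_sub h2).fun_add (h3.const_mul c)
  convert h4 using 1 <;> ring

/-- Quadratic Taylor bound from a Lipschitz derivative. -/
lemma taylor_bound {L : ℝ} (hL : 0 ≤ L)
    (hLip : ∀ p q : ℝ, |logistic' p - logistic' q| ≤ L * |p - q|) (x s : ℝ) :
    |logistic (x + s) - logistic x - logistic' x * s| ≤ L / 2 * s ^ 2 := by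
  have key : ∀ z : ℝ, |logistic z - logistic x - logistic' x * (z - x)| ≤ L / 2 * (z - x) ^ 2 := by
    intro z
    set F := fun t => logistic t - logistic x - logistic' x * (t - x) + -(L/2) * (t - x) ^ 2
      with hFdef
    set G := fun t => logistic t - logistic x - logistic' x * (t - x) + (L/2) * (t - x) ^ 2
      with hGdef
    have hF : ∀ t, HasDerivAt F (logistic' t - logistic' x + -(L/2) * (2 * (t - x))) t :=
      hasDerivAt_aux x (-(L/2))
    have hG : ∀ t, HasDerivAt G (logistic' t - logistic' x + (L/2) * (2 * (t - x))) t :=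
      hasDerivAt_aux x (L/2)
    have hFx : F x = 0 := by simp [hFdef]
    have hGx : G x = 0 := by simp [hGdef]
    have hFz : F z ≤ 0 ∧ 0 ≤ G z := by
      rcases le_total x z with hxz | hzx
      · constructor
        · rw [← hFx]
          refine le_of_deriv_nonpos hF hxz ?_
          intro t ht
          have h5 := hLip t x
          rw [abs_of_nonneg (by linarith [ht.1] : (0:ℝ) ≤ t - x)] at h5
          have h2 := (abs_le.1 h5).2
          nlinarith [ht.1]
        · rw [← hGx]
          have h6 := le_of_deriv_nonpos (f := fun t => -G t)
            (f' := fun t => -(logistic' t - logistic' x + (L/2) * (2 * (t - x))))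
            (fun t => (hG t).neg) hxz ?_
          · linarith
          · intro t ht
            have h5 := hLip t x
            rw [abs_of_nonneg (by linarith [ht.1] : (0:ℝ) ≤ t - x)] at h5
            have h2 := (abs_le.1 h5).1
            nlinarith [ht.1]
      · constructor
        · rw [← hFx]
          have h6 := le_of_deriv_nonpos (f := fun t => -F t)
            (f' := fun t => -(logistic' t - logistic' x + -(L/2) * (2 * (t - x))))
            (fun t => (hF t).neg) hzx ?_
          · linarith
          · intro t ht
            have h5 := hLip t x
            rw [abs_of_nonpos (by linarith [ht.2] : t - x ≤ 0)] at h5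
            have h2 := (abs_le.1 h5).1
            nlinarith [ht.2]
        · rw [← hGx]
          refine le_of_deriv_nonpos hG hzx ?_
          intro t ht
          have h5 := hLip t x
          rw [abs_of_nonpos (by linarith [ht.2] : t - x ≤ 0)] at h5
          have h2 := (abs_le.1 h5).2
          nlinarith [ht.2]
    rw [abs_le]
    constructor
    · have := hFz.2; simp only [hGdef] at this; nlinarith
    · have := hFz.1; simp only [hFdef] at this; nlinarith
  have h := key (x + s)
  simpa using h

lemma hasDerivAt_Phi (x : ℝ) :
    HasDerivAt (fun x : ℝ => Real.log (1 + Real.exp x)) (logistic x) x := by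
  have h : HasDerivAt (fun x : ℝ => 1 + Real.exp x) (Real.exp x) x :=
    (Real.hasDerivAt_exp x).const_add 1
  have h2 := h.log (by positivity)
  convert h2 using 1
  rw [logistic, Real.exp_neg, eq_div_iff (by positivity)]
  have hx := (Real.exp_pos x).ne'
  field_simp
  ring

open scoped RealInnerProductSpace

set_option maxHeartbeats 2000000 in
/-- row-wise deterministic existence for the logistic score equation.
Here `lam` is the smallest eigenvalue of `H = Σ σ'(η*_ℓ) a_ℓ a_ℓᵀ`, characterized via the
Rayleigh quotient as the infimum of `v ↦ Σ σ'(η*_ℓ) ⟨a_ℓ, v⟩²` over unit vectors, `β` and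
`γ` are suprema over unit vectors, and `L₃ = sup |σ''|`. If
`R = ‖N‖ + ‖B‖ + L₃β ≤ λ²/(4L₃γ)` with `λ, γ > 0`, then the score map `S` has a zero
within distance `2R/λ` of `θ*`. -/
theorem stmt_4 (r M : ℕ) (hr : 1 ≤ r) (hM : 1 ≤ M)
    (a : Fin M → EuclideanSpace ℝ (Fin r))
    (y ηstar dres : Fin M → ℝ) (θstar : EuclideanSpace ℝ (Fin r))
    (S : EuclideanSpace ℝ (Fin r) → EuclideanSpace ℝ (Fin r))
    (hS : ∀ θ, S θ = ∑ ℓ, (y ℓ - logistic (ηstar ℓ + ⟪a ℓ, θ - θstar⟫ + dres ℓ)) • a ℓ)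
    (N : EuclideanSpace ℝ (Fin r))
    (hN : N = ∑ ℓ, (y ℓ - logistic (ηstar ℓ)) • a ℓ)
    (lam : ℝ)
    (hlam : lam = sInf {c : ℝ | ∃ v : EuclideanSpace ℝ (Fin r), ‖v‖ = 1 ∧
        c = ∑ ℓ, deriv logistic (ηstar ℓ) * ⟪a ℓ, v⟫ ^ 2})
    (B : EuclideanSpace ℝ (Fin r))
    (hB : B = ∑ ℓ, (deriv logistic (ηstar ℓ) * dres ℓ) • a ℓ)
    (β γ L₃ R : ℝ)
    (hβ : β = sSup {c : ℝ | ∃ v : EuclideanSpace ℝ (Fin r), ‖v‖ = 1 ∧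
        c = ∑ ℓ, |⟪a ℓ, v⟫| * dres ℓ ^ 2})
    (hγ : γ = sSup {c : ℝ | ∃ v : EuclideanSpace ℝ (Fin r), ‖v‖ = 1 ∧
        c = ∑ ℓ, |⟪a ℓ, v⟫| ^ 3})
    (hL₃ : L₃ = ⨆ x : ℝ, |deriv (deriv logistic) x|)
    (hR : R = ‖N‖ + ‖B‖ + L₃ * β)
    (hlam_pos : 0 < lam) (hγ_pos : 0 < γ)
    (hcond : R ≤ lam ^ 2 / (4 * L₃ * γ)) :
    ∃ θhat : EuclideanSpace ℝ (Fin r), S θhat = 0 ∧ ‖θhat - θstar‖ ≤ 2 * R / lam := by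
  classical
  rw [deriv2_logistic] at hL₃
  rw [deriv_logistic] at hlam hB
  -- facts about L₃
  have bdd : BddAbove (Set.range fun x => |logistic'' x|) :=
    ⟨1, by rintro v ⟨x, rfl⟩; exact abs_logistic''_le_one x⟩
  have hL3_ge : ∀ x, |logistic'' x| ≤ L₃ := fun x => hL₃ ▸ le_ciSup bdd x
  have hL3_pos : 0 < L₃ := by
    have h := hL3_ge (-Real.log 2)
    rw [logistic''_at_log2, abs_of_nonneg (by norm_num)] at h
    linarith
  have hLip : ∀ p q : ℝ, |logistic' p - logistic' q| ≤ L₃ * |p - q| := fun p q =>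
    Convex.norm_image_sub_le_of_norm_deriv_le
      (fun t _ => (hasDerivAt_logistic' t).differentiableAt)
      (fun t _ => by rw [(hasDerivAt_logistic' t).deriv]; exact hL3_ge t)
      convex_univ (Set.mem_univ q) (Set.mem_univ p)
  have htay := taylor_bound hL3_pos.le hLip
  -- a unit vector
  have hr0 : 0 < r := hr
  set e0 : EuclideanSpace ℝ (Fin r) := EuclideanSpace.single (⟨0, hr0⟩ : Fin r) (1 : ℝ) with he0
  have he0norm : ‖e0‖ = 1 := by rw [he0, EuclideanSpace.norm_single]; norm_num
  -- sup / inf facts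
  have hβ_ge : ∀ v : EuclideanSpace ℝ (Fin r), ‖v‖ = 1 →
      (∑ ℓ, |⟪a ℓ, v⟫| * dres ℓ ^ 2) ≤ β := by
    intro v hv
    rw [hβ]
    refine le_csSup ⟨∑ ℓ, ‖a ℓ‖ * dres ℓ ^ 2, ?_⟩ ⟨v, hv, rfl⟩
    rintro cc ⟨w, hw, rfl⟩
    refine Finset.sum_le_sum fun ℓ _ => ?_
    have h := abs_real_inner_le_norm (a ℓ) w
    rw [hw, mul_one] at h
    exact mul_le_mul_of_nonneg_right h (sq_nonneg _)
  have hγ_ge : ∀ v : EuclideanSpace ℝ (Fin r), ‖v‖ = 1 →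
      (∑ ℓ, |⟪a ℓ, v⟫| ^ 3) ≤ γ := by
    intro v hv
    rw [hγ]
    refine le_csSup ⟨∑ ℓ, ‖a ℓ‖ ^ 3, ?_⟩ ⟨v, hv, rfl⟩
    rintro cc ⟨w, hw, rfl⟩
    refine Finset.sum_le_sum fun ℓ _ => ?_
    have h := abs_real_inner_le_norm (a ℓ) w
    rw [hw, mul_one] at h
    exact pow_le_pow_left₀ (abs_nonneg _) h 3
  have hlam_le : ∀ v : EuclideanSpace ℝ (Fin r), ‖v‖ = 1 →
      lam ≤ ∑ ℓ, logistic' (ηstar ℓ) * ⟪a ℓ, v⟫ ^ 2 := by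
    intro v hv
    rw [hlam]
    refine csInf_le ⟨0, ?_⟩ ⟨v, hv, rfl⟩
    rintro cc ⟨w, hw, rfl⟩
    exact Finset.sum_nonneg fun ℓ _ => mul_nonneg (logistic'_nonneg _) (sq_nonneg _)
  have hβ_nonneg : 0 ≤ β :=
    le_trans (Finset.sum_nonneg fun ℓ _ => mul_nonneg (abs_nonneg _) (sq_nonneg _))
      (hβ_ge e0 he0norm)
  have hR_nonneg : 0 ≤ R := by
    have h1 := norm_nonneg N; have h2 := norm_nonneg B
    have h3 := mul_nonneg hL3_pos.le hβ_nonneg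
    rw [hR]; linarith
  rcases eq_or_lt_of_le hR_nonneg with hR0 | hRpos
  · -- degenerate case R = 0 : θstar itself is a zero of the score
    have hsum0 : ‖N‖ + ‖B‖ + L₃ * β = 0 := by rw [← hR]; exact hR0.symm
    have h1 := norm_nonneg N; have h2 := norm_nonneg B
    have h3 := mul_nonneg hL3_pos.le hβ_nonneg
    have hNz : N = 0 := norm_eq_zero.mp (by linarith)
    have hβz : β = 0 := by nlinarith
    have hd0 : ∀ ℓ, dres ℓ = 0 ∨ a ℓ = 0 := by
      intro ℓ
      by_contra hcon
      push_neg at hcon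
      obtain ⟨hd, ha⟩ := hcon
      set v : EuclideanSpace ℝ (Fin r) := (‖a ℓ‖⁻¹ : ℝ) • a ℓ with hv
      have hvn : ‖v‖ = 1 := norm_smul_inv_norm ha
      have hnn : ∀ i ∈ Finset.univ, (0:ℝ) ≤ |⟪a i, v⟫| * dres i ^ 2 :=
        fun i _ => mul_nonneg (abs_nonneg _) (sq_nonneg _)
      have hz : (∑ i, |⟪a i, v⟫| * dres i ^ 2) = 0 := by
        have := hβ_ge v hvn
        rw [hβz] at this
        exact le_antisymm this (Finset.sum_nonneg hnn)
      have hterm := (Finset.sum_eq_zero_iff_of_nonneg hnn).mp hz ℓ (Finset.mem_univ ℓ)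
      rw [hv, real_inner_smul_right, real_inner_self_eq_norm_sq] at hterm
      have hna : 0 < ‖a ℓ‖ := norm_pos_iff.mpr ha
      rw [abs_of_nonneg (by positivity)] at hterm
      have hd2 : 0 < dres ℓ ^ 2 := by positivity
      have : ‖a ℓ‖⁻¹ * ‖a ℓ‖ ^ 2 > 0 := by positivity
      nlinarith
    refine ⟨θstar, ?_, ?_⟩
    · rw [hS]
      have hcongr : ∀ ℓ : Fin M,
          (y ℓ - logistic (ηstar ℓ + ⟪a ℓ, θstar - θstar⟫ + dres ℓ)) • a ℓ
          = (y ℓ - logistic (ηstar ℓ)) • a ℓ := by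
        intro ℓ
        rcases hd0 ℓ with h | h
        · rw [h, sub_self, inner_zero_right, add_zero, add_zero]
        · rw [h, smul_zero, smul_zero]
      rw [Finset.sum_congr rfl fun ℓ _ => hcongr ℓ, ← hN, hNz]
    · rw [← hR0]
      simp
  · -- main case R > 0
    set ρ : ℝ := 2 * R / lam with hρdef
    have hρpos : 0 < ρ := div_pos (by linarith) hlam_pos
    -- the potential function φ and its derivative
    set φ : EuclideanSpace ℝ (Fin r) → ℝ := fun θ =>
      ∑ ℓ, (Real.log (1 + Real.exp (ηstar ℓ + ⟪a ℓ, θ - θstar⟫ + dres ℓ))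
        - y ℓ * (ηstar ℓ + ⟪a ℓ, θ - θstar⟫ + dres ℓ)) with hφdef
    have hφderiv : ∀ θ, HasFDerivAt φ ((innerSL ℝ) (-(S θ))) θ := by
      intro θ
      have hη : ∀ ℓ : Fin M, HasFDerivAt
          (fun θ' : EuclideanSpace ℝ (Fin r) => ηstar ℓ + ⟪a ℓ, θ' - θstar⟫ + dres ℓ)
          ((innerSL ℝ) (a ℓ)) θ := by
        intro ℓ
        have h0 : HasFDerivAt
            (fun θ' : EuclideanSpace ℝ (Fin r) => ηstar ℓ + (⟪a ℓ, θ'⟫ - ⟪a ℓ, θstar⟫) + dres ℓ)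
            ((innerSL ℝ) (a ℓ)) θ :=
          ((((innerSL ℝ (a ℓ)).hasFDerivAt).sub_const _).const_add _).add_const _
        have heq : (fun θ' : EuclideanSpace ℝ (Fin r) => ηstar ℓ + ⟪a ℓ, θ' - θstar⟫ + dres ℓ)
            = fun θ' => ηstar ℓ + (⟪a ℓ, θ'⟫ - ⟪a ℓ, θstar⟫) + dres ℓ := by
          funext θ'
          rw [inner_sub_right]
        rw [heq]
        exact h0
      have hterm : ∀ ℓ : Fin M, HasFDerivAt
          (fun θ' : EuclideanSpace ℝ (Fin r) =>
            Real.log (1 + Real.exp (ηstar ℓ + ⟪a ℓ, θ' - θstar⟫ + dres ℓ))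
              - y ℓ * (ηstar ℓ + ⟪a ℓ, θ' - θstar⟫ + dres ℓ))
          ((logistic (ηstar ℓ + ⟪a ℓ, θ - θstar⟫ + dres ℓ) - y ℓ) • (innerSL ℝ) (a ℓ)) θ := by
        intro ℓ
        have h1 := (hasDerivAt_Phi (ηstar ℓ + ⟪a ℓ, θ - θstar⟫ + dres ℓ)).comp_hasFDerivAt θ (hη ℓ)
        have h2 := (hη ℓ).const_mul (y ℓ)
        have h3 := h1.sub h2
        rw [sub_smul]
        exact h3
      have hsum := HasFDerivAt.fun_sum (fun ℓ (_ : ℓ ∈ Finset.univ) => hterm ℓ)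
      have heq2 : (innerSL ℝ) (-(S θ)) = ∑ ℓ ∈ Finset.univ,
          (logistic (ηstar ℓ + ⟪a ℓ, θ - θstar⟫ + dres ℓ) - y ℓ) • (innerSL ℝ) (a ℓ) := by
        apply ContinuousLinearMap.ext
        intro wv
        simp only [ContinuousLinearMap.sum_apply, ContinuousLinearMap.smul_apply,
          innerSL_apply_apply, smul_eq_mul]
        rw [hS, inner_neg_left, sum_inner, ← Finset.sum_neg_distrib]
        exact Finset.sum_congr rfl fun ℓ _ => by rw [real_inner_smul_left]; ring
      rw [heq2]
      exact hsum
    have hφdiff : Differentiable ℝ φ := fun θ => (hφderiv θ).differentiableAt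
    obtain ⟨θ0, hθ0mem, hθ0min⟩ := (isCompact_closedBall θstar ρ).exists_isMinOn
      ⟨θstar, Metric.mem_closedBall_self hρpos.le⟩ hφdiff.continuous.continuousOn
    have hdist : ‖θ0 - θstar‖ ≤ ρ := by
      rw [← dist_eq_norm]
      exact Metric.mem_closedBall.mp hθ0mem
    -- key boundary estimate
    have key : ∀ u : EuclideanSpace ℝ (Fin r), ‖u‖ = 1 → ⟪S (θstar + ρ • u), u⟫ ≤ 0 := by
      intro u hu
      have hsub1 : θstar + ρ • u - θstar = ρ • u := by abel
      have hinner : ⟪S (θstar + ρ • u), u⟫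
          = ∑ ℓ, (y ℓ - logistic (ηstar ℓ + ρ * ⟪a ℓ, u⟫ + dres ℓ)) * ⟪a ℓ, u⟫ := by
        rw [hS, sum_inner]
        refine Finset.sum_congr rfl fun ℓ _ => ?_
        rw [real_inner_smul_left, hsub1, real_inner_smul_right]
      rw [hinner]
      set rem : Fin M → ℝ := fun ℓ =>
        logistic (ηstar ℓ + ρ * ⟪a ℓ, u⟫ + dres ℓ) - logistic (ηstar ℓ)
          - logistic' (ηstar ℓ) * (ρ * ⟪a ℓ, u⟫ + dres ℓ) with hremdef
      have hsplit : ∀ ℓ : Fin M,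
          (y ℓ - logistic (ηstar ℓ + ρ * ⟪a ℓ, u⟫ + dres ℓ)) * ⟪a ℓ, u⟫
          = (y ℓ - logistic (ηstar ℓ)) * ⟪a ℓ, u⟫
            - (ρ * (logistic' (ηstar ℓ) * ⟪a ℓ, u⟫ ^ 2)
              + logistic' (ηstar ℓ) * dres ℓ * ⟪a ℓ, u⟫)
            - rem ℓ * ⟪a ℓ, u⟫ := by
        intro ℓ
        simp only [hremdef]
        ring
      rw [Finset.sum_congr rfl fun ℓ _ => hsplit ℓ, Finset.sum_sub_distrib,
        Finset.sum_sub_distrib, Finset.sum_add_distrib, ← Finset.mul_sum]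
      have hNb : (∑ ℓ, (y ℓ - logistic (ηstar ℓ)) * ⟪a ℓ, u⟫) ≤ ‖N‖ := by
        have h17 : (∑ ℓ, (y ℓ - logistic (ηstar ℓ)) * ⟪a ℓ, u⟫) = ⟪N, u⟫ := by
          rw [hN, sum_inner]
          exact Finset.sum_congr rfl fun ℓ _ => (real_inner_smul_left _ _ _).symm
        rw [h17]
        have h18 := real_inner_le_norm N u
        rwa [hu, mul_one] at h18
      have hBb : -‖B‖ ≤ ∑ ℓ, logistic' (ηstar ℓ) * dres ℓ * ⟪a ℓ, u⟫ := by
        have h17 : (∑ ℓ, logistic' (ηstar ℓ) * dres ℓ * ⟪a ℓ, u⟫) = ⟪B, u⟫ := by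
          rw [hB, sum_inner]
          exact Finset.sum_congr rfl fun ℓ _ => (real_inner_smul_left _ _ _).symm
        rw [h17]
        have h18 := abs_real_inner_le_norm B u
        rw [hu, mul_one] at h18
        linarith [neg_abs_le ⟪B, u⟫]
      have hHb : lam ≤ ∑ ℓ, logistic' (ηstar ℓ) * ⟪a ℓ, u⟫ ^ 2 := hlam_le u hu
      have hremb : |∑ ℓ, rem ℓ * ⟪a ℓ, u⟫| ≤ L₃ * ρ ^ 2 * γ + L₃ * β := by
        calc |∑ ℓ, rem ℓ * ⟪a ℓ, u⟫| ≤ ∑ ℓ, |rem ℓ * ⟪a ℓ, u⟫| :=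
              Finset.abs_sum_le_sum_abs _ _
          _ ≤ ∑ ℓ, (L₃ * ρ ^ 2 * |⟪a ℓ, u⟫| ^ 3 + L₃ * (|⟪a ℓ, u⟫| * dres ℓ ^ 2)) := by
              refine Finset.sum_le_sum fun ℓ _ => ?_
              have habs : |rem ℓ| ≤ L₃ / 2 * (ρ * ⟪a ℓ, u⟫ + dres ℓ) ^ 2 := by
                have h19 := htay (ηstar ℓ) (ρ * ⟪a ℓ, u⟫ + dres ℓ)
                have h20 : ηstar ℓ + (ρ * ⟪a ℓ, u⟫ + dres ℓ)
                    = ηstar ℓ + ρ * ⟪a ℓ, u⟫ + dres ℓ := by ring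
                rw [h20] at h19
                simpa [hremdef] using h19
              rw [abs_mul]
              have hc3 : |⟪a ℓ, u⟫| ^ 3 = ⟪a ℓ, u⟫ ^ 2 * |⟪a ℓ, u⟫| := by
                rw [pow_succ, sq_abs]
              rw [hc3]
              nlinarith [abs_nonneg (⟪a ℓ, u⟫), abs_nonneg (rem ℓ),
                sq_nonneg (ρ * ⟪a ℓ, u⟫ - dres ℓ),
                mul_le_mul_of_nonneg_right habs (abs_nonneg (⟪a ℓ, u⟫)),
                hL3_pos.le, mul_nonneg hL3_pos.le (abs_nonneg (⟪a ℓ, u⟫)),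
                sq_nonneg (⟪a ℓ, u⟫), sq_nonneg (dres ℓ)]
          _ = L₃ * ρ ^ 2 * (∑ ℓ, |⟪a ℓ, u⟫| ^ 3) + L₃ * (∑ ℓ, |⟪a ℓ, u⟫| * dres ℓ ^ 2) := by
              rw [Finset.sum_add_distrib, ← Finset.mul_sum, ← Finset.mul_sum]
          _ ≤ L₃ * ρ ^ 2 * γ + L₃ * β := by
              have h21 := hγ_ge u hu
              have h22 := hβ_ge u hu
              have h23 : (0:ℝ) ≤ L₃ * ρ ^ 2 := by positivity
              have h24 := mul_le_mul_of_nonneg_left h21 h23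
              have h25 := mul_le_mul_of_nonneg_left h22 hL3_pos.le
              linarith
      have hfinal : R - ρ * lam + L₃ * ρ ^ 2 * γ ≤ 0 := by
        have hρlam : ρ * lam = 2 * R := by
          rw [hρdef]; field_simp
        have hcond' : R * (4 * L₃ * γ) ≤ lam ^ 2 := by
          have h24 : (0:ℝ) < 4 * L₃ * γ := by positivity
          exact (le_div_iff₀ h24).mp hcond
        have h6 : ρ ^ 2 * lam ^ 2 = 4 * R ^ 2 := by nlinarith [hρlam]
        have h27 : L₃ * ρ ^ 2 * γ * lam ^ 2 = 4 * L₃ * γ * R ^ 2 := by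
          linear_combination (L₃ * γ) * h6
        have h28 : 4 * L₃ * γ * R ^ 2 ≤ R * lam ^ 2 := by nlinarith [hcond', hRpos.le]
        have h29 : L₃ * ρ ^ 2 * γ ≤ R := by
          have h30 : L₃ * ρ ^ 2 * γ * lam ^ 2 ≤ R * lam ^ 2 := by linarith
          exact le_of_mul_le_mul_right h30 (by positivity)
        linarith [hρlam]
      have hρH : ρ * lam ≤ ρ * ∑ ℓ, logistic' (ηstar ℓ) * ⟪a ℓ, u⟫ ^ 2 :=
        mul_le_mul_of_nonneg_left hHb hρpos.le
      rw [hR] at hfinal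
      linarith [neg_abs_le (∑ ℓ, rem ℓ * ⟪a ℓ, u⟫), hremb, hNb, hBb, hρH]
    rcases lt_or_eq_of_le hdist with hint | hbd
    · -- interior minimum
      have hball : Metric.closedBall θstar ρ ∈ nhds θ0 :=
        Filter.mem_of_superset (Metric.isOpen_ball.mem_nhds
          (by rw [Metric.mem_ball, dist_eq_norm]; exact hint)) Metric.ball_subset_closedBall
      have hloc := (hθ0min.isLocalMin hball).hasFDerivAt_eq_zero (hφderiv θ0)
      have hz : ⟪S θ0, S θ0⟫ = 0 := by
        have h4 := DFunLike.congr_fun hloc (S θ0)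
        simp only [ContinuousLinearMap.zero_apply, innerSL_apply_apply, inner_neg_left,
          neg_eq_zero] at h4
        exact h4
      exact ⟨θ0, inner_self_eq_zero.mp hz, hdist⟩
    · -- boundary minimum
      set u : EuclideanSpace ℝ (Fin r) := ρ⁻¹ • (θ0 - θstar) with hudef
      have hunorm : ‖u‖ = 1 := by
        rw [hudef, norm_smul, ← hbd]
        have h5 : ‖θ0 - θstar‖ > 0 := hbd ▸ hρpos
        rw [norm_inv, Real.norm_eq_abs, abs_of_pos h5]
        field_simp
      have hθ0eq : θstar + ρ • u = θ0 := by
        rw [hudef, smul_smul, mul_inv_cancel₀ hρpos.ne', one_smul]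
        abel
      -- radial direction : ⟪S θ0, u⟫ ≥ 0
      have hrad : 0 ≤ ⟪S θ0, u⟫ := by
        have hc : HasDerivAt (fun t : ℝ => θstar + t • u) u ρ := by
          simpa using ((hasDerivAt_id ρ).smul_const u).const_add θstar
        have hφat : HasFDerivAt φ ((innerSL ℝ) (-(S θ0))) ((fun t : ℝ => θstar + t • u) ρ) := by
          simpa [hθ0eq] using hφderiv θ0
        have hcurve := hφat.comp_hasDerivAt ρ hc
        have htend := hasDerivAt_iff_tendsto_slope.mp hcurve
        have hsub : (Set.Iio ρ) ⊆ {ρ}ᶜ := fun t ht => ne_of_lt ht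
        have htend' := htend.mono_left (nhdsWithin_mono ρ hsub)
        have hle : (innerSL ℝ) (-(S θ0)) u ≤ 0 := by
          refine le_of_tendsto htend' ?_
          filter_upwards [Ioo_mem_nhdsLT_of_mem (Set.mem_Ioc.mpr ⟨hρpos, le_refl ρ⟩)] with t ht
          have hmem : θstar + t • u ∈ Metric.closedBall θstar ρ := by
            rw [Metric.mem_closedBall, dist_eq_norm]
            have h7 : θstar + t • u - θstar = t • u := by abel
            rw [h7, norm_smul, hunorm, mul_one, Real.norm_eq_abs, abs_of_pos ht.1]
            exact ht.2.le
          have hφge : φ θ0 ≤ φ (θstar + t • u) := hθ0min hmem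
          rw [slope_def_field]
          apply div_nonpos_of_nonneg_of_nonpos
          · simp only [Function.comp]
            rw [hθ0eq]
            linarith
          · linarith [ht.2]
        rw [innerSL_apply_apply, inner_neg_left] at hle
        linarith
      -- tangential direction : ⟪S θ0, w⟫ = 0
      set w : EuclideanSpace ℝ (Fin r) := S θ0 - ⟪S θ0, u⟫ • u with hwdef
      have hwu : ⟪u, w⟫ = 0 := by
        rw [hwdef, inner_sub_right, real_inner_smul_right, real_inner_self_eq_norm_sq,
          hunorm]
        rw [real_inner_comm]
        ring
      have htan : ⟪S θ0, w⟫ = 0 := by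
        have hq : HasDerivAt (fun t : ℝ => 1 + t ^ 2 * ‖w‖ ^ 2) 0 0 := by
          have h8 := ((hasDerivAt_pow 2 (0 : ℝ)).mul_const (‖w‖ ^ 2)).const_add 1
          simpa using h8
        have hsq : HasDerivAt (fun t : ℝ => Real.sqrt (1 + t ^ 2 * ‖w‖ ^ 2)) 0 0 := by
          have h10 : (1 : ℝ) + (0 : ℝ) ^ 2 * ‖w‖ ^ 2 ≠ 0 := by norm_num
          have h9 := (Real.hasDerivAt_sqrt h10).comp (0 : ℝ) hq
          simpa [Function.comp_def] using h9
        have hsmul : HasDerivAt (fun t : ℝ => ρ * (Real.sqrt (1 + t ^ 2 * ‖w‖ ^ 2))⁻¹) 0 0 := by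
          have hne : Real.sqrt (1 + (0 : ℝ) ^ 2 * ‖w‖ ^ 2) ≠ 0 := by simp
          have h11 := (hsq.inv hne).const_mul ρ
          simpa using h11
        have hm : HasDerivAt (fun t : ℝ => u + t • w) w 0 := by
          simpa using ((hasDerivAt_id (0 : ℝ)).smul_const w).const_add u
        have hc2 : HasDerivAt
            (fun t : ℝ => θstar + (ρ * (Real.sqrt (1 + t ^ 2 * ‖w‖ ^ 2))⁻¹) • (u + t • w))
            (ρ • w) 0 := by
          have h12 := (hsmul.smul hm).const_add θstar
          simpa using h12
        have hnorm1 : ∀ t : ℝ, ‖u + t • w‖ = Real.sqrt (1 + t ^ 2 * ‖w‖ ^ 2) := by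
          intro t
          have h13 : ‖u + t • w‖ ^ 2 = 1 + t ^ 2 * ‖w‖ ^ 2 := by
            rw [norm_add_sq_real, hunorm, real_inner_smul_right, hwu, norm_smul,
              Real.norm_eq_abs, mul_pow, sq_abs]
            ring
          rw [← h13, Real.sqrt_sq (norm_nonneg _)]
        have hmem2 : ∀ t : ℝ,
            θstar + (ρ * (Real.sqrt (1 + t ^ 2 * ‖w‖ ^ 2))⁻¹) • (u + t • w)
              ∈ Metric.closedBall θstar ρ := by
          intro t
          have hsqrt_pos : 0 < Real.sqrt (1 + t ^ 2 * ‖w‖ ^ 2) :=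
            Real.sqrt_pos.mpr (by positivity)
          rw [Metric.mem_closedBall, dist_eq_norm]
          have h14 : θstar + (ρ * (Real.sqrt (1 + t ^ 2 * ‖w‖ ^ 2))⁻¹) • (u + t • w) - θstar
              = (ρ * (Real.sqrt (1 + t ^ 2 * ‖w‖ ^ 2))⁻¹) • (u + t • w) := by abel
          rw [h14, norm_smul, hnorm1, Real.norm_eq_abs,
            abs_of_pos (by positivity : 0 < ρ * (Real.sqrt (1 + t ^ 2 * ‖w‖ ^ 2))⁻¹),
            mul_assoc, inv_mul_cancel₀ hsqrt_pos.ne', mul_one]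
        have hc0 : θstar + (ρ * (Real.sqrt (1 + (0:ℝ) ^ 2 * ‖w‖ ^ 2))⁻¹) • (u + (0:ℝ) • w)
            = θ0 := by
          rw [show (1 : ℝ) + (0:ℝ) ^ 2 * ‖w‖ ^ 2 = 1 by ring, Real.sqrt_one, inv_one, mul_one,
            zero_smul, add_zero]
          exact hθ0eq
        have hφc : HasFDerivAt φ ((innerSL ℝ) (-(S θ0)))
            ((fun t : ℝ => θstar + (ρ * (Real.sqrt (1 + t ^ 2 * ‖w‖ ^ 2))⁻¹) • (u + t • w))
              (0 : ℝ)) := by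
          simp only []
          rw [hc0]
          exact hφderiv θ0
        have hcurve2 := hφc.comp_hasDerivAt 0 hc2
        have hlocmin : IsLocalMin
            (φ ∘ fun t : ℝ =>
              θstar + (ρ * (Real.sqrt (1 + t ^ 2 * ‖w‖ ^ 2))⁻¹) • (u + t • w)) 0 := by
          refine Filter.Eventually.of_forall fun t => ?_
          have h16 := hθ0min (hmem2 t)
          simpa [Function.comp, hθ0eq] using h16
        have h15 := hlocmin.hasDerivAt_eq_zero hcurve2
        rw [innerSL_apply_apply, inner_neg_left, real_inner_smul_right, neg_eq_zero] at h15
        rcases mul_eq_zero.mp h15 with h | h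
        · exact absurd h hρpos.ne'
        · exact h
      have hSu : ⟪S θ0, u⟫ = 0 := by
        have h6 := key u hunorm
        rw [hθ0eq] at h6
        linarith
      have hz : ⟪S θ0, S θ0⟫ = 0 := by
        have hdec : S θ0 = ⟪S θ0, u⟫ • u + w := by rw [hwdef]; abel
        calc ⟪S θ0, S θ0⟫ = ⟪S θ0, ⟪S θ0, u⟫ • u + w⟫ := by rw [← hdec]
          _ = ⟪S θ0, u⟫ * ⟪S θ0, u⟫ + ⟪S θ0, w⟫ := by
              rw [inner_add_right, real_inner_smul_right]
          _ = 0 := by rw [hSu, htan]; ring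
      exact ⟨θ0, inner_self_eq_zero.mp hz, le_of_eq hbd⟩
end

section
/- Fix 1 ≤ K < d, scores θ, θ̂ ∈ ℝ^d, and ε ≥ 0 with max_m |θ̂_m − θ_m| ≤ ε. Let S ⊆ {1,…,d} with |S| = K satisfy θ_u ≥ θ_v for all u ∈ S and v ∉ S (a true top-K set), and let Ŝ ⊆ {1,…,d} with |Ŝ| = K satisfy θ̂_u ≥ θ̂_v for all u ∈ Ŝ and v ∉ Ŝ (an estimated top-K set). Let τ := (min_{u∈S} θ_u + max_{v∉S} θ_v)/2 be the top-K decision boundary. Then the symmetric difference satisfies Ŝ △ S ⊆ {m : |θ_m − τ| ≤ 2ε}, and in particular |Ŝ △ S| ≤ |{m : |θ_m − τ| ≤ 2ε}|. -/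
open scoped symmDiff Classical

/-- top-`K` boundary inclusion. If `‖θ̂ − θ‖_∞ ≤ ε`, `S` is a true
top-`K` set for `θ` and `Ŝ` an estimated top-`K` set for `θ̂`, and `τ` is the midpoint of
the `K`-th and `(K+1)`-st true scores, then every model in the symmetric difference
`Ŝ △ S` has true score within `2ε` of `τ`. -/
theorem stmt_8 (d K : ℕ) (hK : 1 ≤ K) (hKd : K < d)
    (θ θhat : Fin d → ℝ) (ε : ℝ) (hε : 0 ≤ ε)
    (herr : ∀ m, |θhat m - θ m| ≤ ε)
    (S Shat : Finset (Fin d))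
    (hScard : S.card = K) (hStop : ∀ u ∈ S, ∀ v ∉ S, θ v ≤ θ u)
    (hShatcard : Shat.card = K) (hShattop : ∀ u ∈ Shat, ∀ v ∉ Shat, θhat v ≤ θhat u)
    (τ : ℝ)
    (hτ : τ = (sInf (θ '' (S : Set (Fin d))) + sSup (θ '' ((Sᶜ : Finset (Fin d)) : Set (Fin d)))) / 2) :
    (Shat ∆ S) ⊆ Finset.univ.filter (fun m => |θ m - τ| ≤ 2 * ε) ∧
    (Shat ∆ S).card ≤ (Finset.univ.filter (fun m => |θ m - τ| ≤ 2 * ε)).card := by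
  set a := sInf (θ '' (S : Set (Fin d))) with ha
  set b := sSup (θ '' ((Sᶜ : Finset (Fin d)) : Set (Fin d))) with hb
  have hSne : S.Nonempty := Finset.card_pos.mp (by omega)
  have hScne : (Sᶜ : Finset (Fin d)).Nonempty := by
    rw [← Finset.card_pos, Finset.card_compl, hScard]
    simpa using hKd
  have hSfin : (θ '' (S : Set (Fin d))).Finite := (S.finite_toSet).image θ
  have hScfin : (θ '' ((Sᶜ : Finset (Fin d)) : Set (Fin d))).Finite :=
    ((Sᶜ : Finset (Fin d)).finite_toSet).image θ
  have hSine : (θ '' (S : Set (Fin d))).Nonempty := hSne.to_set.image θ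
  have hScine : (θ '' ((Sᶜ : Finset (Fin d)) : Set (Fin d))).Nonempty := hScne.to_set.image θ
  have hamem : a ∈ θ '' (S : Set (Fin d)) := hSine.csInf_mem hSfin
  have hbmem : b ∈ θ '' ((Sᶜ : Finset (Fin d)) : Set (Fin d)) := hScine.csSup_mem hScfin
  have hale : ∀ u ∈ S, a ≤ θ u := fun u hu =>
    csInf_le hSfin.bddBelow ⟨u, hu, rfl⟩
  have hble : ∀ v ∉ S, θ v ≤ b := fun v hv =>
    le_csSup hScfin.bddAbove ⟨v, by simpa using hv, rfl⟩
  have hba : b ≤ a := by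
    obtain ⟨u, hu, hua⟩ := hamem
    obtain ⟨v, hv, hvb⟩ := hbmem
    rw [← hua, ← hvb]
    exact hStop u hu v (by simpa using hv)
  have hτa : τ ≤ a := by rw [hτ]; linarith
  have hbτ : b ≤ τ := by rw [hτ]; linarith
  have herr' : ∀ m, θhat m - ε ≤ θ m ∧ θ m ≤ θhat m + ε := by
    intro m; have := abs_le.mp (herr m); constructor <;> linarith [this.1, this.2]
  have key : ∀ m ∈ Shat ∆ S, |θ m - τ| ≤ 2 * ε := by
    intro m hm
    rw [Finset.mem_symmDiff] at hm
    rcases hm with ⟨hmS, hmNS⟩ | ⟨hmS, hmNS⟩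
    · -- m ∈ Shat, m ∉ S
      have hcard : (S \ Shat).card = (Shat \ S).card :=
        Finset.card_sdiff_comm (hScard.trans hShatcard.symm)
      have hne : (S \ Shat).Nonempty := by
        rw [← Finset.card_pos, hcard, Finset.card_pos]
        exact ⟨m, Finset.mem_sdiff.mpr ⟨hmS, hmNS⟩⟩
      obtain ⟨n, hn⟩ := hne
      rw [Finset.mem_sdiff] at hn
      have h1 : θhat n ≤ θhat m := hShattop m hmS n hn.2
      have h2 : a ≤ θ n := hale n hn.1
      have h3 : θ m ≤ b := hble m hmNS
      have e1 := herr' m; have e2 := herr' n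
      rw [abs_le]; constructor <;> [skip; skip] <;> nlinarith [e1.1, e1.2, e2.1, e2.2]
    · -- m ∈ S, m ∉ Shat
      have hne : (Shat \ S).Nonempty := by
        rw [← Finset.card_pos, ← Finset.card_sdiff_comm (hScard.trans hShatcard.symm),
          Finset.card_pos]
        exact ⟨m, Finset.mem_sdiff.mpr ⟨hmS, hmNS⟩⟩
      obtain ⟨n, hn⟩ := hne
      rw [Finset.mem_sdiff] at hn
      have h1 : θhat m ≤ θhat n := hShattop n hn.1 m hmNS
      have h2 : a ≤ θ m := hale m hmS
      have h3 : θ n ≤ b := hble n hn.2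
      have e1 := herr' m; have e2 := herr' n
      rw [abs_le]; constructor <;> [skip; skip] <;> nlinarith [e1.1, e1.2, e2.1, e2.2]
  have hsub : (Shat ∆ S) ⊆ Finset.univ.filter (fun m => |θ m - τ| ≤ 2 * ε) := by
    intro m hm
    simp only [Finset.mem_filter, Finset.mem_univ, true_and]
    exact key m hm
  exact ⟨hsub, Finset.card_le_card hsub⟩
end

section
/- Let U ∈ ℝ^{d₁×r} and V ∈ ℝ^{d₂×r} have orthonormal columns with 1_{d₁}^T U = 0, and suppose the μ-incoherence bounds max_t ‖U^T e_t‖₂² ≤ μr/d₁ and max_m ‖V^T e_m‖₂² ≤ μr/d₂ hold, together with μr ≤ d₁. Let P be the orthogonal projection Γ ↦ U U^T Γ + P_{1⊥} Γ V V^T − U U^T Γ V V^T, where P_{1⊥} = I − (1/d₁)·1 1^T. Then for every pairwise design matrix X = e_t (e_m − e_{m'})^T with m ≠ m', the Frobenius norm of its projection satisfies ‖P X‖_F ≤ 2√(μr/d₁) + 4√(μr/d₂). -/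
open Matrix

/-- Frobenius norm of a real matrix. -/
noncomputable def frobNorm {d₁ d₂ : ℕ} (M : Matrix (Fin d₁) (Fin d₂) ℝ) : ℝ :=
  Real.sqrt (∑ i, ∑ j, M i j ^ 2)

/-- The tangent-space projector `Γ ↦ P_U Γ + P_{1⊥} Γ P_V − P_U Γ P_V`. -/
noncomputable def lowRankTangentProj (d₁ d₂ r : ℕ)
    (U : Matrix (Fin d₁) (Fin r) ℝ) (V : Matrix (Fin d₂) (Fin r) ℝ)
    (Γ : Matrix (Fin d₁) (Fin d₂) ℝ) : Matrix (Fin d₁) (Fin d₂) ℝ :=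
  U * Uᵀ * Γ
    + ((1 : Matrix (Fin d₁) (Fin d₁) ℝ) - (d₁ : ℝ)⁻¹ • Matrix.of (fun _ _ => (1 : ℝ)))
        * Γ * (V * Vᵀ)
    - U * Uᵀ * Γ * (V * Vᵀ)

/-- Rank-one (outer product) matrix. -/
noncomputable def outerMat {d₁ d₂ : ℕ} (u : Fin d₁ → ℝ) (v : Fin d₂ → ℝ) :
    Matrix (Fin d₁) (Fin d₂) ℝ := Matrix.of fun i j => u i * v j

lemma frobNorm_eq {d₁ d₂ : ℕ} (M : Matrix (Fin d₁) (Fin d₂) ℝ) :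
    frobNorm M = ‖(WithLp.equiv 2 ((Fin d₁ × Fin d₂) → ℝ)).symm (fun p => M p.1 p.2)‖ := by
  simp [frobNorm, EuclideanSpace.norm_eq, Real.norm_eq_abs, sq_abs,
    Fintype.sum_prod_type]

lemma frobNorm_triangle3 {d₁ d₂ : ℕ} (A B C : Matrix (Fin d₁) (Fin d₂) ℝ) :
    frobNorm (A + B - C) ≤ frobNorm A + frobNorm B + frobNorm C := by
  rw [frobNorm_eq, frobNorm_eq A, frobNorm_eq B, frobNorm_eq C]
  have : ((WithLp.equiv 2 ((Fin d₁ × Fin d₂) → ℝ)).symm (fun p => (A + B - C) p.1 p.2))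
      = (WithLp.equiv 2 _).symm (fun p => A p.1 p.2) + (WithLp.equiv 2 _).symm (fun p => B p.1 p.2)
        - (WithLp.equiv 2 _).symm (fun p => C p.1 p.2) := by
    ext p; simp [Matrix.sub_apply, Matrix.add_apply]
  rw [this]
  calc ‖_ + _ - _‖ ≤ ‖_ + _‖ + ‖_‖ := norm_sub_le _ _
    _ ≤ _ := by gcongr; exact norm_add_le _ _

lemma frobNorm_outerMat {d₁ d₂ : ℕ} (u : Fin d₁ → ℝ) (v : Fin d₂ → ℝ) :
    frobNorm (outerMat u v) = Real.sqrt (∑ i, u i ^ 2) * Real.sqrt (∑ j, v j ^ 2) := by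
  rw [← Real.sqrt_mul (by positivity)]
  unfold frobNorm outerMat
  congr 1
  rw [Finset.sum_mul_sum]
  simp [mul_pow]

lemma ortho_sum {d r : ℕ} (W : Matrix (Fin d) (Fin r) ℝ) (hW : Wᵀ * W = 1)
    (x : Fin r → ℝ) : ∑ i, (∑ k, W i k * x k) ^ 2 = ∑ k, x k ^ 2 := by
  have hWo : ∀ k k', ∑ i, W i k * W i k' = if k = k' then 1 else 0 := by
    intro k k'
    have := congrFun (congrFun hW k) k'
    simpa [Matrix.mul_apply, Matrix.one_apply, Matrix.transpose_apply] using this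
  calc ∑ i, (∑ k, W i k * x k) ^ 2
      = ∑ i, ∑ k, ∑ k', (W i k * x k) * (W i k' * x k') := by
        apply Finset.sum_congr rfl; intros; rw [sq, Finset.sum_mul_sum]
    _ = ∑ k, ∑ k', (x k * x k') * ∑ i, W i k * W i k' := by
        rw [Finset.sum_comm]
        apply Finset.sum_congr rfl; intros k _
        rw [Finset.sum_comm]
        apply Finset.sum_congr rfl; intros k' _
        rw [Finset.mul_sum]
        apply Finset.sum_congr rfl; intros; ring
    _ = ∑ k, x k ^ 2 := by
        simp [hWo, mul_ite, Finset.sum_ite_eq, sq]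

lemma proj_decomp (d₁ d₂ r : ℕ) (U : Matrix (Fin d₁) (Fin r) ℝ) (V : Matrix (Fin d₂) (Fin r) ℝ)
    (t : Fin d₁) (m m' : Fin d₂) :
    lowRankTangentProj d₁ d₂ r U V
        (Matrix.single t m 1 - Matrix.single t m' 1)
      = outerMat (fun i => ∑ k, U i k * U t k)
            (fun j => (if j = m then (1:ℝ) else 0) - (if j = m' then 1 else 0))
        + outerMat (fun i => (if i = t then (1:ℝ) else 0) - (d₁ : ℝ)⁻¹)
            (fun j => ∑ k, (V m k - V m' k) * V j k)
        - outerMat (fun i => ∑ k, U i k * U t k)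
            (fun j => ∑ k, (V m k - V m' k) * V j k) := by
  ext i j
  simp [lowRankTangentProj, outerMat, Matrix.mul_apply, Matrix.sub_apply, Matrix.add_apply,
    Matrix.single, Matrix.one_apply, ite_and, sub_mul, mul_sub,
    Finset.sum_sub_distrib, Finset.mul_sum, Finset.sum_ite_eq, Finset.sum_ite_eq',
    mul_comm, mul_left_comm, eq_comm]

/-- pairwise tangent-projection envelope. Under orthonormality,
row-centering `1ᵀU = 0`, and `μ`-incoherence with `μr ≤ d₁`, the projection of the
pairwise design matrix `X = e_t (e_m − e_{m'})ᵀ` satisfies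
`‖P X‖_F ≤ 2√(μr/d₁) + 4√(μr/d₂)`. -/
theorem stmt_14 (d₁ d₂ r : ℕ) (μ : ℝ)
    (U : Matrix (Fin d₁) (Fin r) ℝ) (V : Matrix (Fin d₂) (Fin r) ℝ)
    (hU : Uᵀ * U = 1) (hV : Vᵀ * V = 1)
    (hU0 : ∀ j, ∑ i, U i j = 0)
    (hUinc : ∀ t, ∑ j, U t j ^ 2 ≤ μ * r / d₁)
    (hVinc : ∀ m, ∑ j, V m j ^ 2 ≤ μ * r / d₂)
    (hμr : μ * r ≤ d₁)
    (t : Fin d₁) (m m' : Fin d₂) (hmm : m ≠ m') :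
    frobNorm (lowRankTangentProj d₁ d₂ r U V
        (Matrix.single t m 1 - Matrix.single t m' 1))
      ≤ 2 * Real.sqrt (μ * r / d₁) + 4 * Real.sqrt (μ * r / d₂) := by
  have hd₁ : (0:ℝ) < d₁ := by exact_mod_cast t.pos
  have hd₂ : (0:ℝ) < d₂ := by exact_mod_cast m.pos
  have hq₁ : (0:ℝ) ≤ μ * r / d₁ := le_trans (by positivity) (hUinc t)
  have hq₂ : (0:ℝ) ≤ μ * r / d₂ := le_trans (by positivity) (hVinc m)
  set a1 := Real.sqrt (μ * r / d₁) with ha1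
  set a2 := Real.sqrt (μ * r / d₂) with ha2
  -- sums
  have hSa : ∑ i, (∑ k, U i k * U t k) ^ 2 ≤ μ * r / d₁ := by
    rw [ortho_sum U hU (fun k => U t k)]; exact hUinc t
  have hSw : ∑ j, ((if j = m then (1:ℝ) else 0) - (if j = m' then 1 else 0)) ^ 2 = 2 := by
    have : ∀ j, ((if j = m then (1:ℝ) else 0) - (if j = m' then 1 else 0)) ^ 2
        = (if j = m then (1:ℝ) else 0) + (if j = m' then 1 else 0) := by
      intro j
      rcases eq_or_ne j m with h | h <;> rcases eq_or_ne j m' with h' | h' <;>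
        simp_all <;> exact absurd (h ▸ h') hmm
    rw [Finset.sum_congr rfl fun j _ => this j, Finset.sum_add_distrib]
    simp
    norm_num
  have hSb : ∑ i, ((if i = t then (1:ℝ) else 0) - (d₁ : ℝ)⁻¹) ^ 2 ≤ 1 := by
    have : ∀ i, ((if i = t then (1:ℝ) else 0) - (d₁ : ℝ)⁻¹) ^ 2
        = (if i = t then (1:ℝ) - 2 * (d₁:ℝ)⁻¹ else 0) + ((d₁:ℝ)⁻¹)^2 := by
      intro i; rcases eq_or_ne i t with h | h <;> simp [h] <;> ring
    rw [Finset.sum_congr rfl fun i _ => this i, Finset.sum_add_distrib]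
    simp only [Finset.sum_ite_eq', Finset.mem_univ, if_true, Finset.sum_const,
      Finset.card_univ, Fintype.card_fin, nsmul_eq_mul]
    have : (d₁:ℝ) * ((d₁:ℝ)⁻¹)^2 = (d₁:ℝ)⁻¹ := by field_simp
    rw [this]
    have h1 : (d₁:ℝ)⁻¹ ≤ 1 := by
      rw [inv_le_one_iff₀]; right; exact_mod_cast Nat.one_le_cast.mpr t.pos
    linarith [inv_nonneg.mpr hd₁.le]
  have hSc : ∑ j, (∑ k, (V m k - V m' k) * V j k) ^ 2 ≤ 4 * (μ * r / d₂) := by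
    have : ∑ j, (∑ k, (V m k - V m' k) * V j k) ^ 2 = ∑ k, (V m k - V m' k) ^ 2 := by
      have := ortho_sum V hV (fun k => V m k - V m' k)
      rw [← this]
      apply Finset.sum_congr rfl; intros j _
      congr 1
      apply Finset.sum_congr rfl; intros; ring
    rw [this]
    calc ∑ k, (V m k - V m' k) ^ 2 ≤ ∑ k, (2 * V m k ^ 2 + 2 * V m' k ^ 2) := by
          apply Finset.sum_le_sum; intro k _; nlinarith [sq_nonneg (V m k + V m' k)]
      _ = 2 * (∑ k, V m k ^ 2) + 2 * (∑ k, V m' k ^ 2) := by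
          rw [Finset.sum_add_distrib, Finset.mul_sum, Finset.mul_sum]
      _ ≤ 2 * (μ * r / d₂) + 2 * (μ * r / d₂) := by
          gcongr; exacts [hVinc m, hVinc m']
      _ = 4 * (μ * r / d₂) := by ring
  -- sqrt facts
  have hsqrt4 : Real.sqrt (4 * (μ * r / d₂)) = 2 * a2 := by
    rw [show (4:ℝ) * (μ * r / d₂) = 2^2 * (μ * r / d₂) by ring,
      Real.sqrt_mul (by positivity), Real.sqrt_sq (by norm_num)]
  have ha1le1 : a1 ≤ 1 := by
    rw [ha1]
    apply Real.sqrt_le_one.mpr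
    rw [div_le_one hd₁]; exact hμr
  have hsqrt2 : Real.sqrt 2 ≤ 2 := by
    nlinarith [Real.sq_sqrt (by norm_num : (0:ℝ) ≤ 2), Real.sqrt_nonneg 2]
  -- bound the three terms
  have e1 : frobNorm (outerMat (fun i => ∑ k, U i k * U t k)
      (fun j => (if j = m then (1:ℝ) else 0) - (if j = m' then 1 else 0))) ≤ 2 * a1 := by
    rw [frobNorm_outerMat, hSw]
    calc Real.sqrt (∑ i, (∑ k, U i k * U t k) ^ 2) * Real.sqrt 2 ≤ a1 * 2 := by
          apply mul_le_mul (Real.sqrt_le_sqrt hSa) hsqrt2 (Real.sqrt_nonneg _)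
            (Real.sqrt_nonneg _)
      _ = 2 * a1 := by ring
  have e2 : frobNorm (outerMat (fun i => (if i = t then (1:ℝ) else 0) - (d₁ : ℝ)⁻¹)
      (fun j => ∑ k, (V m k - V m' k) * V j k)) ≤ 2 * a2 := by
    rw [frobNorm_outerMat]
    calc Real.sqrt (∑ i, ((if i = t then (1:ℝ) else 0) - (d₁ : ℝ)⁻¹) ^ 2)
          * Real.sqrt (∑ j, (∑ k, (V m k - V m' k) * V j k) ^ 2)
        ≤ 1 * (2 * a2) := by
          apply mul_le_mul _ _ (Real.sqrt_nonneg _) (by norm_num)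
          · simpa using Real.sqrt_le_one.mpr hSb
          · rw [← hsqrt4]; exact Real.sqrt_le_sqrt hSc
      _ = 2 * a2 := by ring
  have e3 : frobNorm (outerMat (fun i => ∑ k, U i k * U t k)
      (fun j => ∑ k, (V m k - V m' k) * V j k)) ≤ 2 * a2 := by
    rw [frobNorm_outerMat]
    calc Real.sqrt (∑ i, (∑ k, U i k * U t k) ^ 2)
          * Real.sqrt (∑ j, (∑ k, (V m k - V m' k) * V j k) ^ 2)
        ≤ 1 * (2 * a2) := by
          apply mul_le_mul _ _ (Real.sqrt_nonneg _) (by norm_num)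
          · exact le_trans (Real.sqrt_le_sqrt hSa) ha1le1
          · rw [← hsqrt4]; exact Real.sqrt_le_sqrt hSc
      _ = 2 * a2 := by ring
  rw [proj_decomp]
  calc frobNorm _ ≤ _ + _ + _ := frobNorm_triangle3 _ _ _
    _ ≤ 2 * a1 + 2 * a2 + 2 * a2 := by gcongr
    _ ≤ 2 * a1 + 4 * a2 := by linarith
end
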